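/- For any five points a, b, c, x, y in ℝ^n equipped with the ℓ1 norm, the 5-gonal (pentagonal) inequality holds: ‖x−y‖₁ + ‖a−b‖₁ + ‖a−c‖₁ + ‖b−c‖₁ ≤ ‖x−a‖₁ + ‖x−b‖₁ + ‖x−c‖₁ + ‖y−a‖₁ + ‖y−b‖₁ + ‖y−c‖₁. -/
import Mathlib

lemma pent_aux (a b c x y : ℝ) :
    |x - y| + (|a - b| + |a - c| + |b - c|) ≤
      (|x - a| + |x - b| + |x - c|) + (|y - a| + |y - b| + |y - c|) := by
  have B : ∀ u v : ℝ, u - v ≤ |u - v| ∧ v - u ≤ |u - v| := fun u v =>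
    ⟨le_abs_self _, by rw [abs_sub_comm]; exact le_abs_self _⟩
  obtain ⟨b1, b2⟩ := B x a
  obtain ⟨b3, b4⟩ := B x b
  obtain ⟨b5, b6⟩ := B x c
  obtain ⟨b7, b8⟩ := B y a
  obtain ⟨b9, b10⟩ := B y b
  obtain ⟨b11, b12⟩ := B y c
  rcases abs_cases (x - y) with ⟨h1,h1'⟩|⟨h1,h1'⟩ <;>
  rcases abs_cases (a - b) with ⟨h2,h2'⟩|⟨h2,h2'⟩ <;>
  rcases abs_cases (a - c) with ⟨h3,h3'⟩|⟨h3,h3'⟩ <;>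
  rcases abs_cases (b - c) with ⟨h4,h4'⟩|⟨h4,h4'⟩ <;>
  linarith

/-- The 5-gonal (pentagonal) inequality for the ℓ1 norm on ℝ^n. -/
theorem l1_five_gonal (n : ℕ) (a b c x y : Fin n → ℝ) :
    (∑ i, |x i - y i|) + ((∑ i, |a i - b i|) + (∑ i, |a i - c i|) + (∑ i, |b i - c i|)) ≤
      ((∑ i, |x i - a i|) + (∑ i, |x i - b i|) + (∑ i, |x i - c i|)) +
        ((∑ i, |y i - a i|) + (∑ i, |y i - b i|) + (∑ i, |y i - c i|)) := by
  have := Finset.sum_le_sum (s := Finset.univ) (fun i (_ : i ∈ Finset.univ) =>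
    pent_aux (a i) (b i) (c i) (x i) (y i))
  simpa [Finset.sum_add_distrib] using this
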